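/- arXiv:quant-ph/0512075 — 4 statements merged into one kernel-verified Lean document; each statement's English description precedes it below -/
import Mathlib

section
/- For the sequence of coefficients a_{n,k}(u) = √(C(2j_n, k)) (sin(u/√n))^k (cos(u/√n))^{2j_n−k} with j_n = ⌊(μ−1/2)n⌋ and μ ∈ (1/2, 1], for each fixed k ∈ ℕ and u > 0, a_{n,k}(u) converges as n → ∞ to e^{−(2μ−1)u²/2} (u√(2μ−1))^k / √(k!). -/
open Filter

private lemma sin_div_self_lim : Tendsto (fun x : ℝ => Real.sin x / x) (nhdsWithin 0 {0}ᶜ) (nhds 1) := by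
  have h := hasDerivAt_iff_tendsto_slope.mp (Real.hasDerivAt_sin 0)
  rw [Real.cos_zero] at h
  refine h.congr fun y => ?_
  simp [slope_def_field]

private lemma log_one_add_div_lim :
    Tendsto (fun x : ℝ => Real.log (1 + x) / x) (nhdsWithin 0 {0}ᶜ) (nhds 1) := by
  have h := hasDerivAt_iff_tendsto_slope.mp (Real.hasDerivAt_log (one_ne_zero (α := ℝ)))
  rw [inv_one] at h
  have hmap : Tendsto (fun x : ℝ => 1 + x) (nhdsWithin 0 {0}ᶜ) (nhdsWithin 1 {1}ᶜ) := by
    refine tendsto_nhdsWithin_of_tendsto_nhds_of_eventually_within _ ?_ ?_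
    · have : Tendsto (fun x : ℝ => 1 + x) (nhds 0) (nhds 1) := by
        exact (continuous_const.add continuous_id).tendsto' 0 1 (by simp)
      exact this.mono_left nhdsWithin_le_nhds
    · filter_upwards [self_mem_nhdsWithin] with x hx
      simp only [Set.mem_compl_iff, Set.mem_singleton_iff] at hx ⊢
      intro h'; exact hx (by linarith)
  have := h.comp hmap
  refine this.congr fun x => ?_
  simp [slope_def_field, Function.comp]

private lemma sqrt_nat_atTop : Tendsto (fun n : ℕ => Real.sqrt n) atTop atTop := by
  refine tendsto_atTop_atTop.2 fun b => ⟨⌈b ^ 2⌉₊, fun a ha => ?_⟩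
  have h1 : (b : ℝ) ^ 2 ≤ a := le_trans (Nat.le_ceil _) (by exact_mod_cast ha)
  calc b ≤ |b| := le_abs_self b
    _ = Real.sqrt (b ^ 2) := (Real.sqrt_sq_eq_abs b).symm
    _ ≤ Real.sqrt a := Real.sqrt_le_sqrt h1

private lemma sqrt_pow' (x : ℝ) (h : 0 ≤ x) (n : ℕ) :
    Real.sqrt (x ^ n) = Real.sqrt x ^ n := by
  induction n with
  | zero => simp
  | succ m ih => rw [pow_succ, pow_succ, Real.sqrt_mul (pow_nonneg h m), ih]

/-- Coefficients of the rotated highest-weight spin state converge to coherent state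
amplitudes: with `j_n = ⌊(μ−1/2)n⌋`,
`√C(2j_n,k) sin(u/√n)^k cos(u/√n)^{2j_n−k} → e^{−(2μ−1)u²/2} (u√(2μ−1))^k/√(k!)`. -/
theorem spin_coherent_coefficients (μ u : ℝ) (hμ : μ ∈ Set.Ioc (1/2 : ℝ) 1)
    (hu : 0 < u) (k : ℕ) :
    Tendsto (fun n : ℕ =>
        Real.sqrt ((2 * Nat.floor ((μ - 1/2) * n)).choose k)
          * Real.sin (u / Real.sqrt n) ^ k
          * Real.cos (u / Real.sqrt n) ^ (2 * Nat.floor ((μ - 1/2) * n) - k))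
      atTop
      (nhds (Real.exp (-(2 * μ - 1) * u ^ 2 / 2) * (u * Real.sqrt (2 * μ - 1)) ^ k
        / Real.sqrt k.factorial)) := by
  obtain ⟨hμ1, hμ2⟩ := hμ
  set a : ℝ := μ - 1/2 with ha
  have ha0 : 0 < a := by rw [ha]; linarith
  set c : ℝ := 2 * μ - 1 with hc
  have hc0 : 0 < c := by rw [hc]; linarith
  have hca : c = 2 * a := by rw [hc, ha]; ring
  set m : ℕ → ℕ := fun n => 2 * Nat.floor (a * n) with hm
  set t : ℕ → ℝ := fun n => u / Real.sqrt n with htdef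
  -- t n positive for n ≥ 1, and tends to 0
  have htpos : ∀ n : ℕ, 1 ≤ n → 0 < t n := by
    intro n hn
    exact div_pos hu (Real.sqrt_pos.mpr (by exact_mod_cast Nat.pos_of_ne_zero (by omega)))
  have ht0 : Tendsto t atTop (nhds 0) := by
    have : Tendsto (fun n : ℕ => (Real.sqrt n)⁻¹) atTop (nhds 0) :=
      sqrt_nat_atTop.inv_tendsto_atTop
    have := this.const_mul u
    simpa [htdef, div_eq_mul_inv] using this
  have ht0' : Tendsto t atTop (nhdsWithin 0 {0}ᶜ) := by
    refine tendsto_nhdsWithin_of_tendsto_nhds_of_eventually_within _ ht0 ?_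
    filter_upwards [eventually_ge_atTop 1] with n hn
    exact (htpos n hn).ne'
  -- m n / n → c
  have hmc : Tendsto (fun n : ℕ => (m n : ℝ) / n) atTop (nhds c) := by
    have h1 := (tendsto_nat_floor_mul_div_atTop ha0.le).comp
      (tendsto_natCast_atTop_atTop (R := ℝ))
    have h2 := h1.const_mul 2
    rw [← hca] at h2
    refine h2.congr fun n => ?_
    simp only [Function.comp, hm]
    push_cast
    ring
  have hmtop : Tendsto m atTop atTop := by
    have h1 : Tendsto (fun n : ℕ => a * n) atTop atTop :=
      (tendsto_natCast_atTop_atTop (R := ℝ)).const_mul_atTop ha0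
    exact tendsto_atTop_mono (fun n => Nat.le_mul_of_pos_left _ two_pos)
      (tendsto_nat_floor_atTop.comp h1)
  -- √n * sin (t n) → u
  have hsin : Tendsto (fun n : ℕ => Real.sqrt n * Real.sin (t n)) atTop (nhds u) := by
    have h1 := (sin_div_self_lim.comp ht0').const_mul u
    rw [mul_one] at h1
    refine h1.congr' ?_
    filter_upwards [eventually_ge_atTop 1] with n hn
    have htp := htpos n hn
    have hs : (0:ℝ) < Real.sqrt n := Real.sqrt_pos.mpr (by exact_mod_cast Nat.pos_of_ne_zero (by omega))
    simp only [Function.comp, htdef]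
    field_simp
  -- key: (m n - r) * sin(t n)^2 → c u^2
  have hkey : ∀ r : ℝ, Tendsto (fun n : ℕ => ((m n : ℝ) - r) * Real.sin (t n) ^ 2)
      atTop (nhds (c * u ^ 2)) := by
    intro r
    have h1 : Tendsto (fun n : ℕ => ((m n : ℝ) / n - r / n) * (Real.sqrt n * Real.sin (t n)) ^ 2)
        atTop (nhds ((c - 0) * u ^ 2)) :=
      (hmc.sub (tendsto_const_div_atTop_nhds_zero_nat r)).mul (hsin.pow 2)
    rw [sub_zero] at h1
    refine h1.congr' ?_
    filter_upwards [eventually_ge_atTop 1] with n hn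
    have hn0 : (0:ℝ) < n := by exact_mod_cast Nat.pos_of_ne_zero (by omega)
    have hsq : Real.sqrt n ^ 2 = (n : ℝ) := Real.sq_sqrt hn0.le
    rw [mul_pow, hsq]
    field_simp
  -- product limit
  have hA : Tendsto (fun n : ℕ => ∏ i ∈ Finset.range k, (((m n : ℝ) - i) * Real.sin (t n) ^ 2))
      atTop (nhds ((c * u ^ 2) ^ k)) := by
    have := tendsto_finset_prod (f := fun (i : ℕ) (n : ℕ) => ((m n : ℝ) - i) * Real.sin (t n) ^ 2)
      (a := fun _ : ℕ => c * u ^ 2) (Finset.range k) (fun i _ => hkey i)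
    simpa using this
  -- exponent limit
  have hx : Tendsto (fun n : ℕ => -Real.sin (t n) ^ 2) atTop (nhdsWithin 0 {0}ᶜ) := by
    refine tendsto_nhdsWithin_of_tendsto_nhds_of_eventually_within _ ?_ ?_
    · have : Tendsto (fun n : ℕ => Real.sin (t n)) atTop (nhds 0) := by
        have := (Real.continuous_sin.tendsto 0).comp ht0
        simpa [Function.comp_def] using this
      have := (this.pow 2).neg
      simpa using this
    · filter_upwards [ht0.eventually_lt_const Real.pi_pos, eventually_ge_atTop 1] with n hlt hn
      have hsp := Real.sin_pos_of_pos_of_lt_pi (htpos n hn) hlt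
      simp only [Set.mem_compl_iff, Set.mem_singleton_iff, neg_eq_zero]
      positivity
  have hE : Tendsto (fun n : ℕ => ((m n - k : ℕ) : ℝ) * Real.log (Real.cos (t n)))
      atTop (nhds (-(c * u ^ 2) / 2)) := by
    have hlog := log_one_add_div_lim.comp hx
    have hprod : Tendsto (fun n : ℕ =>
        (Real.log (1 + -Real.sin (t n) ^ 2) / (-Real.sin (t n) ^ 2))
          * (-(((m n : ℝ) - k) * Real.sin (t n) ^ 2) / 2))
        atTop (nhds (1 * (-(c * u ^ 2) / 2))) :=
      hlog.mul (((hkey k).neg).div_const 2)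
    rw [one_mul] at hprod
    refine hprod.congr' ?_
    filter_upwards [eventually_ge_atTop 1,
      ht0.eventually_lt_const (half_pos Real.pi_pos),
      hmtop.eventually_ge_atTop k] with n hn hlt hmk
    have htp := htpos n hn
    have hcos : 0 < Real.cos (t n) := Real.cos_pos_of_mem_Ioo ⟨by linarith, hlt⟩
    have hsp : 0 < Real.sin (t n) :=
      Real.sin_pos_of_pos_of_lt_pi htp (by linarith [Real.pi_pos])
    have hs2 : Real.sin (t n) ^ 2 ≠ 0 := by positivity
    have hlogeq : Real.log (1 + -Real.sin (t n) ^ 2) = 2 * Real.log (Real.cos (t n)) := by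
      have h1 : 1 + -Real.sin (t n) ^ 2 = Real.cos (t n) ^ 2 := by
        have := Real.sin_sq_add_cos_sq (t n); linarith
      rw [h1, Real.log_pow]; norm_num
    have hcast : ((m n - k : ℕ) : ℝ) = (m n : ℝ) - k := by
      push_cast [hmk]; ring
    rw [hlogeq, hcast]
    field_simp
  set K : ℝ := (k.factorial : ℝ) with hKdef
  have hK : 0 < K := by rw [hKdef]; exact_mod_cast Nat.factorial_pos k
  have hfinal : Tendsto (fun n : ℕ =>
      Real.sqrt ((1 / K) * ∏ i ∈ Finset.range k, (((m n : ℝ) - i) * Real.sin (t n) ^ 2))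
        * Real.exp (((m n - k : ℕ) : ℝ) * Real.log (Real.cos (t n))))
      atTop (nhds (Real.sqrt ((1 / K) * (c * u ^ 2) ^ k) * Real.exp (-(c * u ^ 2) / 2))) :=
    ((hA.const_mul (1 / K)).sqrt).mul ((Real.continuous_exp.tendsto _).comp hE)
  have hval : Real.sqrt ((1 / K) * (c * u ^ 2) ^ k) * Real.exp (-(c * u ^ 2) / 2)
      = Real.exp (-c * u ^ 2 / 2) * (u * Real.sqrt c) ^ k / Real.sqrt K := by
    have hbase : Real.sqrt (c * u ^ 2) = u * Real.sqrt c := by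
      rw [Real.sqrt_mul hc0.le, Real.sqrt_sq hu.le]; ring
    have h1 : Real.sqrt ((1 / K) * (c * u ^ 2) ^ k) = (u * Real.sqrt c) ^ k / Real.sqrt K := by
      rw [one_div, inv_mul_eq_div, Real.sqrt_div (by positivity),
        sqrt_pow' _ (by positivity), hbase]
    rw [h1, show -(c * u ^ 2) / 2 = -c * u ^ 2 / 2 by ring]
    ring
  rw [hval] at hfinal
  refine hfinal.congr' ?_
  filter_upwards [eventually_ge_atTop 1,
    ht0.eventually_lt_const (half_pos Real.pi_pos),
    hmtop.eventually_ge_atTop k] with n hn hlt hmk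
  have htp := htpos n hn
  have hcos : 0 < Real.cos (t n) := Real.cos_pos_of_mem_Ioo ⟨by linarith, hlt⟩
  have hsp : 0 < Real.sin (t n) :=
    Real.sin_pos_of_pos_of_lt_pi htp (by linarith [Real.pi_pos])
  -- choose cast
  have hdprod : ((m n).descFactorial k : ℝ) = ∏ i ∈ Finset.range k, ((m n : ℝ) - i) := by
    rw [Nat.descFactorial_eq_prod_range, Nat.cast_prod]
    exact Finset.prod_congr rfl fun i hi =>
      Nat.cast_sub ((Finset.mem_range.mp hi).le.trans hmk)
  have h2 : K * ((m n).choose k : ℝ) = ∏ i ∈ Finset.range k, ((m n : ℝ) - i) := by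
    rw [← hdprod, hKdef]
    exact_mod_cast (Nat.descFactorial_eq_factorial_mul_choose (m n) k).symm
  have hprodeq : (1 / K) * ∏ i ∈ Finset.range k, (((m n : ℝ) - i) * Real.sin (t n) ^ 2)
      = ((m n).choose k : ℝ) * (Real.sin (t n) ^ k) ^ 2 := by
    rw [Finset.prod_mul_distrib, Finset.prod_const, Finset.card_range, ← h2]
    rw [← pow_mul, ← pow_mul]
    field_simp
    ring
  have hexp : Real.exp (((m n - k : ℕ) : ℝ) * Real.log (Real.cos (t n)))
      = Real.cos (t n) ^ (m n - k) := by
    rw [Real.exp_nat_mul, Real.exp_log hcos]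
  rw [hprodeq, hexp, Real.sqrt_mul (by positivity), Real.sqrt_sq (by positivity)]
end

section
/- In the problem of discriminating two pure states ψ₊ and ψ₋ in a Hilbert space with overlap s = |⟨ψ₊|ψ₋⟩| < 1, the minimax error probability over two-outcome POVMs (M₋, M₊) with 0 ≤ M₊ ≤ 1, M₋ = 1 − M₊ equals (1 − √(1 − s²))/2; that is, inf_M max(⟨ψ₊, M₋ ψ₊⟩, ⟨ψ₋, M₊ ψ₋⟩) = (1 − √(1 − |⟨ψ₊|ψ₋⟩|²))/2. -/
open ContinuousLinearMap in
noncomputable def projOn {H : Type*} [NormedAddCommGroup H]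
    [InnerProductSpace ℂ H] (g : H) : H →L[ℂ] H :=
  (innerSL ℂ g).smulRight g

lemma projOn_apply {H : Type*} [NormedAddCommGroup H]
    [InnerProductSpace ℂ H] (g x : H) : projOn g x = (inner ℂ g x : ℂ) • g := rfl

lemma projOn_isPositive {H : Type*} [NormedAddCommGroup H]
    [InnerProductSpace ℂ H] [CompleteSpace H] (g : H) : (projOn g).IsPositive := by
  constructor
  · change LinearMap.IsSymmetric _
    intro x y
    simp only [ContinuousLinearMap.coe_coe, projOn_apply, inner_smul_left, inner_smul_right,
      inner_conj_symm]
    ring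
  · intro x
    rw [ContinuousLinearMap.reApplyInnerSelf_apply]
    simp only [projOn_apply, inner_smul_left, inner_conj_symm]
    rw [← inner_conj_symm g x, RCLike.mul_conj, ← RCLike.ofReal_pow, RCLike.ofReal_re]
    positivity

lemma projOn_compl_isPositive {H : Type*} [NormedAddCommGroup H]
    [InnerProductSpace ℂ H] [CompleteSpace H] (g : H) (hg : ‖g‖ = 1) :
    (1 - projOn g).IsPositive := by
  constructor
  · have h1 : IsSelfAdjoint (1 : H →L[ℂ] H) := IsSelfAdjoint.one _
    exact (h1.sub (projOn_isPositive g).isSelfAdjoint).isSymmetric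
  · intro x
    rw [ContinuousLinearMap.reApplyInnerSelf_apply]
    simp only [ContinuousLinearMap.sub_apply, ContinuousLinearMap.one_apply, inner_sub_left,
      projOn_apply, inner_smul_left, inner_conj_symm, map_sub]
    rw [← inner_conj_symm g x, RCLike.mul_conj]
    have hcs : ‖(inner ℂ g x : ℂ)‖ ≤ 1 * ‖x‖ := by
      have := norm_inner_le_norm (𝕜 := ℂ) g x
      rwa [hg] at this
    have h1 : RCLike.re (inner ℂ x x : ℂ) = ‖x‖ ^ 2 := inner_self_eq_norm_sq x
    rw [← RCLike.ofReal_pow, RCLike.ofReal_re]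
    have hsym : ‖(inner ℂ x g : ℂ)‖ = ‖(inner ℂ g x : ℂ)‖ := norm_inner_symm x g
    have hn : 0 ≤ ‖x‖ := norm_nonneg x
    nlinarith [norm_nonneg (inner ℂ g x : ℂ)]

set_option maxHeartbeats 1000000 in
/-- Helstrom bound: the minimax error probability for discriminating two pure states
with overlap `s = |⟨ψ₊|ψ₋⟩| < 1`, over two-outcome POVMs `(1 − M, M)`,
equals `(1 − √(1 − s²))/2`. -/
theorem pure_state_discrimination {H : Type*} [NormedAddCommGroup H]
    [InnerProductSpace ℂ H] [CompleteSpace H]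
    (ψp ψm : H) (hψp : ‖ψp‖ = 1) (hψm : ‖ψm‖ = 1)
    (hs : ‖(inner ℂ ψp ψm : ℂ)‖ < 1) :
    sInf {r : ℝ | ∃ M : H →L[ℂ] H, M.IsPositive ∧ (1 - M).IsPositive ∧
        r = max ((inner ℂ ψp (((1 : H →L[ℂ] H) - M) ψp) : ℂ)).re
                ((inner ℂ ψm (M ψm) : ℂ)).re}
      = (1 - Real.sqrt (1 - ‖(inner ℂ ψp ψm : ℂ)‖ ^ 2)) / 2 := by
  classical
  set c : ℂ := inner ℂ ψp ψm with hc
  set s : ℝ := ‖c‖ with hsdef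
  have hs0 : 0 ≤ s := norm_nonneg _
  have hs1 : s < 1 := hs
  set lam : ℝ := Real.sqrt (1 - s ^ 2) with hlamdef
  have h1s : 0 < 1 - s ^ 2 := by
    rw [show (1 : ℝ) - s ^ 2 = (1 - s) * (1 + s) by ring]
    exact mul_pos (by linarith) (by linarith)
  have hlam_pos : 0 < lam := Real.sqrt_pos.2 h1s
  have hlam_sq : lam ^ 2 = 1 - s ^ 2 := Real.sq_sqrt h1s.le
  -- phase factor
  set u : ℂ := if c = 0 then 1 else (s : ℂ) / c with hu
  have huc : u * c = (s : ℂ) := by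
    by_cases h : c = 0
    · have : s = 0 := by rw [hsdef, h, norm_zero]
      simp [hu, h, this]
    · rw [hu, if_neg h]; field_simp
  have hu1 : ‖u‖ = 1 := by
    by_cases h : c = 0
    · simp [hu, h]
    · have hspos : 0 < s := by
        rw [hsdef]; exact norm_pos_iff.mpr h
      rw [hu, if_neg h, norm_div, Complex.norm_real, Real.norm_of_nonneg hs0, ← hsdef,
        div_self hspos.ne']
  have hu0 : u ≠ 0 := by
    intro h; rw [h, norm_zero] at hu1; norm_num at hu1
  set φ : H := u • ψm with hφdef
  have hφn : ‖φ‖ = 1 := by rw [hφdef, norm_smul, hu1, hψm, one_mul]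
  have hpφ : (inner ℂ ψp φ : ℂ) = (s : ℂ) := by
    rw [hφdef, inner_smul_right, ← hc, huc]
  have hφp : (inner ℂ φ ψp : ℂ) = (s : ℂ) := by
    rw [← inner_conj_symm, hpφ, Complex.conj_ofReal]
  have hpp : (inner ℂ ψp ψp : ℂ) = 1 := by
    rw [inner_self_eq_norm_sq_to_K, hψp]; norm_num
  have hφφ : (inner ℂ φ φ : ℂ) = 1 := by
    rw [inner_self_eq_norm_sq_to_K, hφn]; norm_num
  set v₁ : H := ψp + φ with hv₁def
  set v₂ : H := ψp - φ with hv₂def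
  have h11 : (inner ℂ v₁ v₁ : ℂ) = ((2 + 2 * s : ℝ) : ℂ) := by
    simp only [hv₁def, inner_add_left, inner_add_right, hpp, hφφ, hpφ, hφp]
    push_cast; ring
  have h22 : (inner ℂ v₂ v₂ : ℂ) = ((2 - 2 * s : ℝ) : ℂ) := by
    simp only [hv₂def, inner_sub_left, inner_sub_right, hpp, hφφ, hpφ, hφp]
    push_cast; ring
  have h12 : (inner ℂ v₁ v₂ : ℂ) = 0 := by
    simp only [hv₁def, hv₂def, inner_add_left, inner_sub_right, hpp, hφφ, hpφ, hφp]
    ring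
  have h21 : (inner ℂ v₂ v₁ : ℂ) = 0 := by
    simp only [hv₁def, hv₂def, inner_sub_left, inner_add_right, hpp, hφφ, hpφ, hφp]
    ring
  set A : ℝ := ‖v₁‖ with hAdef
  set B : ℝ := ‖v₂‖ with hBdef
  have hA2 : A ^ 2 = 2 + 2 * s := by
    have h := inner_self_eq_norm_sq (𝕜 := ℂ) v₁
    rw [h11] at h
    simpa using h.symm
  have hB2 : B ^ 2 = 2 - 2 * s := by
    have h := inner_self_eq_norm_sq (𝕜 := ℂ) v₂
    rw [h22] at h
    simpa using h.symm
  have hApos : 0 < A := by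
    have h0 : 0 ≤ A := norm_nonneg _
    rcases h0.lt_or_eq with h | h
    · exact h
    · exfalso; rw [← h] at hA2; norm_num at hA2; linarith
  have hBpos : 0 < B := by
    have h0 : 0 ≤ B := norm_nonneg _
    rcases h0.lt_or_eq with h | h
    · exact h
    · exfalso; rw [← h] at hB2; norm_num at hB2; linarith
  have hAB : A * B = 2 * lam := by
    have h : (A * B) ^ 2 = (2 * lam) ^ 2 := by
      linear_combination (2 - 2 * s) * hA2 + A ^ 2 * hB2 - 4 * hlam_sq
    have h2 : A * B = Real.sqrt ((2 * lam) ^ 2) := by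
      rw [← h, Real.sqrt_sq (by positivity)]
    rw [h2, Real.sqrt_sq (by positivity)]
  set r₁ : ℝ := (Real.sqrt 2 * A)⁻¹ with hr₁def
  set r₂ : ℝ := (Real.sqrt 2 * B)⁻¹ with hr₂def
  have hsq2 : Real.sqrt 2 ^ 2 = 2 := Real.sq_sqrt (by norm_num)
  have h2pos : (0 : ℝ) < Real.sqrt 2 := by positivity
  have hr₁pos : 0 < r₁ := by rw [hr₁def]; positivity
  have hr₂pos : 0 < r₂ := by rw [hr₂def]; positivity
  have hr1s : r₁ ^ 2 * (2 + 2 * s) = 1 / 2 := by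
    rw [hr₁def, ← hA2,
      show ((Real.sqrt 2 * A)⁻¹) ^ 2 * A ^ 2 = (Real.sqrt 2 ^ 2 * A ^ 2)⁻¹ * A ^ 2 by ring,
      hsq2, mul_inv, mul_assoc, inv_mul_cancel₀ (pow_ne_zero 2 hApos.ne'), mul_one]
    norm_num
  have hr2s : r₂ ^ 2 * (2 - 2 * s) = 1 / 2 := by
    rw [hr₂def, ← hB2,
      show ((Real.sqrt 2 * B)⁻¹) ^ 2 * B ^ 2 = (Real.sqrt 2 ^ 2 * B ^ 2)⁻¹ * B ^ 2 by ring,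
      hsq2, mul_inv, mul_assoc, inv_mul_cancel₀ (pow_ne_zero 2 hBpos.ne'), mul_one]
    norm_num
  have hrr : r₁ * r₂ * (2 * lam) = 1 / 2 := by
    rw [hr₁def, hr₂def, ← hAB,
      show (Real.sqrt 2 * A)⁻¹ * (Real.sqrt 2 * B)⁻¹ * (A * B)
        = (Real.sqrt 2 ^ 2 * (A * B))⁻¹ * (A * B) by ring,
      hsq2, mul_inv, mul_assoc,
      inv_mul_cancel₀ (by positivity : A * B ≠ 0), mul_one]
    norm_num
  set fp : H := ((r₁ : ℂ)) • v₁ + ((r₂ : ℂ)) • v₂ with hfpdef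
  set fm : H := ((r₁ : ℂ)) • v₁ - ((r₂ : ℂ)) • v₂ with hfmdef
  have hfpip : (inner ℂ fp fp : ℂ) = ((r₁ ^ 2 * (2 + 2 * s) + r₂ ^ 2 * (2 - 2 * s) : ℝ) : ℂ) := by
    simp only [hfpdef, inner_add_left, inner_add_right, inner_smul_left, inner_smul_right,
      h11, h22, h12, h21, Complex.conj_ofReal]
    push_cast; ring
  have hfpn : ‖fp‖ = 1 := by
    have h := inner_self_eq_norm_sq (𝕜 := ℂ) fp
    rw [hfpip] at h
    simp only [RCLike.re_to_complex, Complex.ofReal_re] at h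
    have h2 : ‖fp‖ ^ 2 = 1 := by rw [← h]; linarith
    have h4 : (‖fp‖ - 1) * (‖fp‖ + 1) = 0 := by linear_combination h2
    rcases mul_eq_zero.mp h4 with h5 | h5
    · linarith
    · linarith [norm_nonneg fp]
  -- quantities for the optimal measurement
  set t₁ : ℝ := r₁ * (1 + s) with ht₁def
  set t₂ : ℝ := r₂ * (1 - s) with ht₂def
  have ht₁ : t₁ ^ 2 = (1 + s) / 4 := by
    rw [ht₁def]; linear_combination ((1 + s) / 2) * hr1s
  have ht₂ : t₂ ^ 2 = (1 - s) / 4 := by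
    rw [ht₂def]; linear_combination ((1 - s) / 2) * hr2s
  have ht₁₂ : t₁ * t₂ = lam / 4 := by
    have h4 : lam * (t₁ * t₂) = lam * (lam / 4) := by
      have h5 : lam * (t₁ * t₂) = r₁ * r₂ * (2 * lam) * ((1 - s ^ 2) / 2) := by
        rw [ht₁def, ht₂def]; ring
      rw [h5, hrr]
      linear_combination (-1 / 4 : ℝ) * hlam_sq
    exact mul_left_cancel₀ hlam_pos.ne' h4
  have hv₁p : (inner ℂ v₁ ψp : ℂ) = ((1 + s : ℝ) : ℂ) := by
    simp only [hv₁def, inner_add_left, hpp, hφp]; push_cast; ring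
  have hv₂p : (inner ℂ v₂ ψp : ℂ) = ((1 - s : ℝ) : ℂ) := by
    simp only [hv₂def, inner_sub_left, hpp, hφp]; push_cast; ring
  have hv₁φ : (inner ℂ v₁ φ : ℂ) = ((1 + s : ℝ) : ℂ) := by
    simp only [hv₁def, inner_add_left, hφφ, hpφ]; push_cast; ring
  have hv₂φ : (inner ℂ v₂ φ : ℂ) = ((s - 1 : ℝ) : ℂ) := by
    simp only [hv₂def, inner_sub_left, hφφ, hpφ]; push_cast; ring
  have hfpψp : (inner ℂ fp ψp : ℂ) = ((t₁ + t₂ : ℝ) : ℂ) := by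
    simp only [hfpdef, inner_add_left, inner_smul_left, hv₁p, hv₂p, Complex.conj_ofReal,
      ht₁def, ht₂def]
    push_cast; ring
  have hfpφ : (inner ℂ fp φ : ℂ) = ((t₁ - t₂ : ℝ) : ℂ) := by
    simp only [hfpdef, inner_add_left, inner_smul_left, hv₁φ, hv₂φ, Complex.conj_ofReal,
      ht₁def, ht₂def]
    push_cast; ring
  have hψm_eq : ψm = u⁻¹ • φ := by
    rw [hφdef, smul_smul, inv_mul_cancel₀ hu0, one_smul]
  set S : Set ℝ := {r : ℝ | ∃ M : H →L[ℂ] H, M.IsPositive ∧ (1 - M).IsPositive ∧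
        r = max ((inner ℂ ψp (((1 : H →L[ℂ] H) - M) ψp) : ℂ)).re
                ((inner ℂ ψm (M ψm) : ℂ)).re} with hSdef
  -- Achievability: the projection onto fp attains (1 - lam)/2
  have hmem : (1 - lam) / 2 ∈ S := by
    refine ⟨projOn fp, projOn_isPositive fp, projOn_compl_isPositive fp hfpn, ?_⟩
    have errp : ((inner ℂ ψp (((1 : H →L[ℂ] H) - projOn fp) ψp) : ℂ)).re = (1 - lam) / 2 := by
      rw [ContinuousLinearMap.sub_apply, ContinuousLinearMap.one_apply, inner_sub_right,
        projOn_apply, inner_smul_right, ← inner_conj_symm ψp fp, hfpψp, Complex.conj_ofReal,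
        hpp]
      have hsq : (t₁ + t₂) * (t₁ + t₂) = (1 + lam) / 2 := by
        linear_combination ht₁ + ht₂ + 2 * ht₁₂
      rw [← Complex.ofReal_mul, hsq]
      simp only [Complex.sub_re, Complex.one_re, Complex.ofReal_re]
      ring
    have errm : ((inner ℂ ψm (projOn fp ψm) : ℂ)).re = (1 - lam) / 2 := by
      have hz : (inner ℂ fp ψm : ℂ) = u⁻¹ * ((t₁ - t₂ : ℝ) : ℂ) := by
        rw [hψm_eq, inner_smul_right, hfpφ]
      rw [projOn_apply, inner_smul_right, ← inner_conj_symm ψm fp, RCLike.mul_conj,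
        ← RCLike.ofReal_pow]
      have hzn : ‖(inner ℂ fp ψm : ℂ)‖ ^ 2 = (1 - lam) / 2 := by
        rw [hz, norm_mul, norm_inv, hu1, Complex.norm_real]
        rw [inv_one, one_mul, Real.norm_eq_abs, sq_abs]
        linear_combination ht₁ + ht₂ - 2 * ht₁₂
      rw [hzn]
      exact Complex.ofReal_re _
    rw [errp, errm, max_self]
  -- Lower bound
  have hlb : ∀ r ∈ S, (1 - lam) / 2 ≤ r := by
    rintro r ⟨M, hM1, hM2, rfl⟩
    -- key inequality
    have hφM : (inner ℂ φ (M φ) : ℂ) = (inner ℂ ψm (M ψm) : ℂ) := by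
      rw [hφdef, map_smul, inner_smul_left, inner_smul_right, ← mul_assoc,
        RCLike.conj_mul, hu1]
      norm_num
    have E1 : (inner ℂ v₁ (M v₂) : ℂ) + (inner ℂ v₂ (M v₁) : ℂ)
        = 2 * ((inner ℂ ψp (M ψp) : ℂ) - (inner ℂ φ (M φ) : ℂ)) := by
      simp only [hv₁def, hv₂def, map_add, map_sub, inner_add_left, inner_sub_left,
        inner_add_right, inner_sub_right]
      ring
    have E2 : (inner ℂ fp (M fp) : ℂ) - (inner ℂ fm (M fm) : ℂ)
        = ((2 * (r₁ * r₂) : ℝ) : ℂ) * ((inner ℂ v₁ (M v₂) : ℂ) + (inner ℂ v₂ (M v₁) : ℂ)) := by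
      simp only [hfpdef, hfmdef, map_add, map_sub, map_smul, inner_add_left, inner_sub_left,
        inner_smul_left, inner_add_right, inner_sub_right, inner_smul_right,
        Complex.conj_ofReal]
      push_cast; ring
    have E3 : (inner ℂ ψp (M ψp) : ℂ) - (inner ℂ φ (M φ) : ℂ)
        = ((lam : ℝ) : ℂ) * ((inner ℂ fp (M fp) : ℂ) - (inner ℂ fm (M fm) : ℂ)) := by
      rw [E2, ← mul_assoc]
      have hcoef : ((lam : ℝ) : ℂ) * ((2 * (r₁ * r₂) : ℝ) : ℂ) = (1 / 2 : ℂ) := by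
        rw [← Complex.ofReal_mul]
        have : lam * (2 * (r₁ * r₂)) = 1 / 2 := by linear_combination hrr
        rw [this]; norm_num
      rw [hcoef, E1]; ring
    have hub : ((inner ℂ fp (M fp) : ℂ)).re ≤ 1 := by
      have h := hM2.2 fp
      rw [ContinuousLinearMap.reApplyInnerSelf_apply] at h
      have hexp : ((1 - M : H →L[ℂ] H) fp) = fp - M fp := rfl
      rw [hexp, inner_sub_left] at h
      have h2 : (inner ℂ fp fp : ℂ) = 1 := by
        rw [inner_self_eq_norm_sq_to_K, hfpn]; norm_num
      rw [h2] at h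
      simp only [RCLike.re_to_complex, Complex.sub_re, Complex.one_re] at h
      have h4 : (inner ℂ (M fp) fp : ℂ).re = ((inner ℂ fp (M fp) : ℂ)).re := by
        rw [← inner_conj_symm fp (M fp), Complex.conj_re]
      linarith
    have hlbm : 0 ≤ ((inner ℂ fm (M fm) : ℂ)).re := by
      have h := hM1.2 fm
      rw [ContinuousLinearMap.reApplyInnerSelf_apply] at h
      simp only [RCLike.re_to_complex] at h
      have h4 : (inner ℂ (M fm) fm : ℂ).re = ((inner ℂ fm (M fm) : ℂ)).re := by
        rw [← inner_conj_symm fm (M fm), Complex.conj_re]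
      linarith
    have key : ((inner ℂ ψp (M ψp) : ℂ)).re - ((inner ℂ ψm (M ψm) : ℂ)).re ≤ lam := by
      have hre : ((inner ℂ ψp (M ψp) : ℂ)).re - ((inner ℂ ψm (M ψm) : ℂ)).re
          = lam * (((inner ℂ fp (M fp) : ℂ)).re - ((inner ℂ fm (M fm) : ℂ)).re) := by
        have := congrArg Complex.re E3
        rw [hφM] at this  -- careful: hφM used inside E3 LHS
        simpa [Complex.sub_re, Complex.re_ofReal_mul] using this
      rw [hre]
      have h1 : ((inner ℂ fp (M fp) : ℂ)).re - ((inner ℂ fm (M fm) : ℂ)).re ≤ 1 := by linarith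
      have := mul_le_mul_of_nonneg_left h1 hlam_pos.le
      linarith
    have errp_eq : ((inner ℂ ψp (((1 : H →L[ℂ] H) - M) ψp) : ℂ)).re
        = 1 - ((inner ℂ ψp (M ψp) : ℂ)).re := by
      rw [ContinuousLinearMap.sub_apply, ContinuousLinearMap.one_apply, inner_sub_right, hpp]
      simp [Complex.sub_re]
    have hsum : 1 - lam ≤ ((inner ℂ ψp (((1 : H →L[ℂ] H) - M) ψp) : ℂ)).re
        + ((inner ℂ ψm (M ψm) : ℂ)).re := by
      rw [errp_eq]
      linarith
    rcases le_total ((inner ℂ ψp (((1 : H →L[ℂ] H) - M) ψp) : ℂ)).re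
        ((inner ℂ ψm (M ψm) : ℂ)).re with h | h
    · rw [max_eq_right h]; linarith
    · rw [max_eq_left h]; linarith
  have hne : S.Nonempty := ⟨_, hmem⟩
  have hbdd : BddBelow S := ⟨(1 - lam) / 2, hlb⟩
  exact le_antisymm (csInf_le hbdd hmem) (le_csInf hne hlb)
end

section
/- For coherent states with real parameters ±u, the optimal discrimination risk (1 − √(1 − e^{−4u²}))/2 is strictly smaller than the risk 1/2 − erf(u) obtained from the optimal classical test on a Gaussian N(±u, 1/2) observation, for all u > 0, where erf(x) = ∫₀ˣ e^{−t²}/√π dt. -/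
open Real MeasureTheory Set

noncomputable def Jerf (v : ℝ) : ℝ := ∫ t in (0:ℝ)..v, Real.exp (-t^2)

lemma cont_gauss : Continuous fun t : ℝ => Real.exp (-t^2) := by
  continuity

lemma exp_neg_taylor {y : ℝ} (h0 : 0 ≤ y) (h1 : y ≤ 1) :
    |Real.exp (-y) - (1 - y + y^2/2)| ≤ 2/9 * y^3 := by
  have hb := Real.exp_bound (x := -y) (by rwa [abs_neg, abs_of_nonneg h0]) (n := 3) (by norm_num)
  have hsum : ∑ m ∈ Finset.range 3, (-y) ^ m / m.factorial = 1 - y + y^2/2 := by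
    simp [Finset.sum_range_succ, Nat.factorial]
    ring
  rw [hsum] at hb
  rw [abs_neg, abs_of_nonneg h0] at hb
  calc |Real.exp (-y) - (1 - y + y^2/2)| ≤ y ^ 3 * (Nat.succ 3 / ((3:ℕ).factorial * 3)) := hb
    _ = 2/9 * y^3 := by norm_num [Nat.factorial]; ring

lemma exp_neg_upper {y : ℝ} (h0 : 0 ≤ y) (h1 : y ≤ 1) :
    Real.exp (-y) ≤ 1 - y + y^2/2 + 2/9*y^3 := by
  have := abs_le.1 (exp_neg_taylor h0 h1)
  linarith [this.2]

lemma exp_neg_lower {y : ℝ} (h0 : 0 ≤ y) (h1 : y ≤ 1) :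
    1 - y + y^2/2 - 2/9*y^3 ≤ Real.exp (-y) := by
  have := abs_le.1 (exp_neg_taylor h0 h1)
  linarith [this.1]

lemma poly_integral (v : ℝ) :
    ∫ t in (0:ℝ)..v, (1 - t^2 + t^4/2 + 2/9*t^6) = v - v^3/3 + v^5/10 + 2/63*v^7 := by
  have h1 : IntervalIntegrable (fun t : ℝ => 1 - t^2) volume 0 v :=
    (Continuous.intervalIntegrable (by continuity) _ _)
  have h2 : IntervalIntegrable (fun t : ℝ => t^4/2) volume 0 v :=
    (Continuous.intervalIntegrable (by continuity) _ _)
  have h3 : IntervalIntegrable (fun t : ℝ => 2/9*t^6) volume 0 v :=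
    (Continuous.intervalIntegrable (by continuity) _ _)
  rw [show (fun t : ℝ => 1 - t^2 + t^4/2 + 2/9*t^6) = fun t : ℝ => ((1 - t^2) + t^4/2) + 2/9*t^6
      from rfl] at *
  rw [intervalIntegral.integral_add (h1.add h2) h3, intervalIntegral.integral_add h1 h2,
    intervalIntegral.integral_sub (Continuous.intervalIntegrable (by continuity) _ _)
      (Continuous.intervalIntegrable (by continuity) _ _)]
  simp [intervalIntegral.integral_div, intervalIntegral.integral_const_mul,
    integral_pow]
  ring

lemma J_le {v : ℝ} (h0 : 0 ≤ v) (h1 : v ≤ 1) :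
    ∫ t in (0:ℝ)..v, Real.exp (-t^2) ≤ v - v^3/3 + v^5/10 + 2/63*v^7 := by
  rw [← poly_integral v]
  apply intervalIntegral.integral_mono_on h0
    (cont_gauss.intervalIntegrable _ _)
    (Continuous.intervalIntegrable (by continuity) _ _)
  intro t ht
  have ht2 : t^2 ≤ 1 := by nlinarith [ht.1, ht.2]
  have := exp_neg_upper (sq_nonneg t) ht2
  nlinarith [this]

lemma key_small {v : ℝ} (h0 : 0 ≤ v) (h1 : v^2 ≤ 0.55) :
    2 * ∫ t in (0:ℝ)..v, Real.exp (-t^2) ≤ Real.pi * v * Real.exp (-v^2) := by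
  have hv1 : v ≤ 1 := by nlinarith
  have hJ := J_le h0 hv1
  have hv2 : v^2 ≤ 1 := by nlinarith
  have he0 := exp_neg_lower (sq_nonneg v) hv2
  have he : 1 - v^2 + v^4/2 - 2/9*v^6 ≤ Real.exp (-v^2) := by
    have e1 : (v^2)^2 = v^4 := by ring
    have e2 : (v^2)^3 = v^6 := by ring
    rw [e1, e2] at he0; exact he0
  have hpoly : 2 * (1 - v^2/3 + v^4/10 + 2/63*v^6) ≤
      Real.pi * (1 - v^2 + v^4/2 - 2/9*v^6) := by
    nlinarith [Real.pi_gt_d6, Real.pi_lt_d6, sub_nonneg.2 h1,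
      sq_nonneg (0.55 - v^2),
      mul_nonneg (mul_nonneg (sq_nonneg v) (sq_nonneg v)) (sub_nonneg.2 h1)]
  have hπv : (0:ℝ) ≤ Real.pi * v := mul_nonneg Real.pi_pos.le h0
  calc 2 * ∫ t in (0:ℝ)..v, Real.exp (-t^2)
      ≤ 2 * (v - v^3/3 + v^5/10 + 2/63*v^7) := by linarith
    _ = v * (2 * (1 - v^2/3 + v^4/10 + 2/63*v^6)) := by ring
    _ ≤ v * (Real.pi * (1 - v^2 + v^4/2 - 2/9*v^6)) :=
        mul_le_mul_of_nonneg_left hpoly h0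
    _ = Real.pi * v * (1 - v^2 + v^4/2 - 2/9*v^6) := by ring
    _ ≤ Real.pi * v * Real.exp (-v^2) := mul_le_mul_of_nonneg_left he hπv

lemma hasDerivAt_Jerf (v : ℝ) : HasDerivAt Jerf (Real.exp (-v^2)) v :=
  (cont_gauss.integral_hasStrictDerivAt 0 v).hasDerivAt

noncomputable def gfun (v : ℝ) : ℝ := Real.pi * (1 - Real.exp (-2*v^2)) - 4 * (Jerf v)^2

lemma hasDerivAt_gfun (v : ℝ) :
    HasDerivAt gfun (4*Real.pi*v*Real.exp (-2*v^2) - 8 * Jerf v * Real.exp (-v^2)) v := by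
  have h1 : HasDerivAt (fun v : ℝ => -2*v^2) (-4*v) v := by
    have := ((hasDerivAt_pow 2 v).const_mul (-2 : ℝ))
    exact this.congr_deriv (by norm_num; ring)
  have h2 : HasDerivAt (fun v : ℝ => Real.exp (-2*v^2)) (Real.exp (-2*v^2) * (-4*v)) v :=
    h1.exp
  have h3 : HasDerivAt (fun v : ℝ => (Jerf v)^2) (2 * Jerf v ^ 1 * Real.exp (-v^2)) v :=
    (hasDerivAt_Jerf v).pow 2
  have h4 := ((h2.const_sub 1).const_mul Real.pi).sub (h3.const_mul 4)
  exact h4.congr_deriv (by ring)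

lemma small_case {u : ℝ} (hu : 0 < u) (h : u^2 ≤ 0.55) :
    4 * (Jerf u)^2 < Real.pi * (1 - Real.exp (-4*u^2)) := by
  have hmono : MonotoneOn gfun (Icc 0 u) := by
    apply monotoneOn_of_deriv_nonneg (convex_Icc 0 u)
      (fun v _ => ((hasDerivAt_gfun v).differentiableAt.continuousAt.continuousWithinAt))
      (fun v _ => (hasDerivAt_gfun v).differentiableAt.differentiableWithinAt)
    intro x hx
    rw [interior_Icc] at hx
    rw [(hasDerivAt_gfun x).deriv]
    have hx0 : 0 ≤ x := hx.1.le
    have hx2 : x^2 ≤ 0.55 := by nlinarith [hx.2, hu]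
    have hk := key_small hx0 hx2
    have hexp : Real.exp (-2*x^2) = Real.exp (-x^2) * Real.exp (-x^2) := by
      rw [← Real.exp_add]; ring_nf
    have hepos : 0 < Real.exp (-x^2) := Real.exp_pos _
    rw [hexp]
    have : 4*Real.pi*x*(Real.exp (-x^2)*Real.exp (-x^2)) - 8*Jerf x*Real.exp (-x^2)
        = 4 * Real.exp (-x^2) * (Real.pi*x*Real.exp (-x^2) - 2*Jerf x) := by ring
    rw [this]
    have h2k : 2 * Jerf x ≤ Real.pi * x * Real.exp (-x^2) := hk
    have h4e : (0:ℝ) ≤ 4 * Real.exp (-x^2) := by positivity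
    nlinarith [h2k, h4e]
  have hg0 : gfun 0 = 0 := by
    simp [gfun, Jerf]
  have hgu : 0 ≤ gfun u := by
    have := hmono (left_mem_Icc.2 hu.le) (right_mem_Icc.2 hu.le) hu.le
    rw [hg0] at this; exact this
  have hlt : Real.exp (-4*u^2) < Real.exp (-2*u^2) :=
    Real.exp_lt_exp.2 (by nlinarith)
  have : gfun u = Real.pi * (1 - Real.exp (-2*u^2)) - 4 * (Jerf u)^2 := rfl
  nlinarith [Real.pi_pos, hgu, hlt]

lemma Jerf_half_le (c : ℝ) (hc : 0 ≤ c) : Jerf c ≤ Real.sqrt Real.pi / 2 := by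
  have hint : Integrable (fun t : ℝ => Real.exp (-t^2)) := by
    have := integrable_exp_neg_mul_sq (b := 1) one_pos
    simpa using this
  have h1 : Jerf c = ∫ t in Ioc (0:ℝ) c, Real.exp (-t^2) := by
    rw [Jerf, intervalIntegral.integral_of_le hc]
  have h2 : ∫ t in Ioc (0:ℝ) c, Real.exp (-t^2) ≤ ∫ t in Ioi (0:ℝ), Real.exp (-t^2) := by
    apply setIntegral_mono_set hint.integrableOn
    · filter_upwards with t using (Real.exp_pos _).le
    · exact HasSubset.Subset.eventuallyLE Set.Ioc_subset_Ioi_self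
  have h3 : ∫ t in Ioi (0:ℝ), Real.exp (-t^2) = Real.sqrt Real.pi / 2 := by
    have := integral_gaussian_Ioi 1
    simpa using this
  rw [h1]; rw [h3] at h2; exact h2

lemma tail_lb {u : ℝ} (hu : 0 < u) :
    Real.sqrt Real.pi - 2 * Jerf u ≥ Real.exp (-(u + 1/2)^2) := by
  have hadd : Jerf u + (∫ t in u..(u+1/2), Real.exp (-t^2)) = Jerf (u + 1/2) :=
    intervalIntegral.integral_add_adjacent_intervals
      (cont_gauss.intervalIntegrable _ _) (cont_gauss.intervalIntegrable _ _)
  have htail : (1/2) * Real.exp (-(u + 1/2)^2) ≤ ∫ t in u..(u+1/2), Real.exp (-t^2) := by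
    have hmono : ∀ t ∈ Icc u (u+1/2), Real.exp (-(u+1/2)^2) ≤ Real.exp (-t^2) := by
      intro t ht
      apply Real.exp_le_exp.2
      nlinarith [ht.1, ht.2, hu]
    calc (1/2) * Real.exp (-(u + 1/2)^2)
        = ∫ _ in u..(u+1/2), Real.exp (-(u+1/2)^2) := by
          rw [intervalIntegral.integral_const]; simp
      _ ≤ ∫ t in u..(u+1/2), Real.exp (-t^2) :=
          intervalIntegral.integral_mono_on (by linarith)
            (intervalIntegrable_const) (cont_gauss.intervalIntegrable _ _) hmono
  have hup := Jerf_half_le (u + 1/2) (by linarith)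
  linarith

lemma large_case {u : ℝ} (hu : 0 < u) (h : 0.55 ≤ u^2) :
    4 * (Jerf u)^2 < Real.pi * (1 - Real.exp (-4*u^2)) := by
  set S := Real.sqrt Real.pi with hSdef
  have hS2 : S^2 = Real.pi := Real.sq_sqrt Real.pi_pos.le
  have hSpos : 0 < S := Real.sqrt_pos.2 Real.pi_pos
  have hA0 : 0 ≤ Jerf u :=
    intervalIntegral.integral_nonneg hu.le (fun t _ => (Real.exp_pos _).le)
  have htail := tail_lb hu
  -- exp(3u^2 - u - 1/4) > S
  have hSlt : S < 1.7725 := by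
    rw [hSdef]
    rw [show (1.7725:ℝ) = Real.sqrt (1.7725^2) from (Real.sqrt_sq (by norm_num)).symm]
    apply Real.sqrt_lt_sqrt Real.pi_pos.le
    nlinarith [Real.pi_lt_d6]
  have h065 : (0.65:ℝ) ≤ 3*u^2 - u - 1/4 := by
    nlinarith [sq_nonneg (u - 0.7416), h, hu]
  have hexp65 : (1.7725:ℝ) < Real.exp 0.65 := by
    have h1 : (1.1625:ℝ) ≤ Real.exp 0.1625 := by
      nlinarith [Real.add_one_le_exp (0.1625:ℝ)]
    have h2 : (1.1625:ℝ)^4 ≤ (Real.exp 0.1625)^4 :=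
      pow_le_pow_left₀ (by norm_num) h1 4
    have h3 : (Real.exp 0.1625)^4 = Real.exp 0.65 := by
      rw [← Real.exp_nat_mul]; norm_num
    nlinarith [h2, h3]
  have hkey : S < Real.exp (3*u^2 - u - 1/4) := by
    calc S < 1.7725 := hSlt
      _ < Real.exp 0.65 := hexp65
      _ ≤ Real.exp (3*u^2 - u - 1/4) := Real.exp_le_exp.2 h065
  -- so exp(-(u+1/2)^2) > S * exp(-4u^2)
  have hsplit : Real.exp (-(u + 1/2)^2)
      = Real.exp (3*u^2 - u - 1/4) * Real.exp (-4*u^2) := by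
    rw [← Real.exp_add]; ring_nf
  have hstep : S * Real.exp (-4*u^2) < Real.exp (-(u + 1/2)^2) := by
    rw [hsplit]
    exact mul_lt_mul_of_pos_right hkey (Real.exp_pos _)
  -- π - 4A² ≥ S * exp(-(u+1/2)^2) > S * S * exp(-4u²) = π exp(-4u²)
  have hfac : S * Real.exp (-(u + 1/2)^2) ≤ Real.pi - 4 * (Jerf u)^2 := by
    nlinarith [htail, hA0, hSpos, hS2, mul_nonneg hA0 (Real.exp_pos (-(u+1/2)^2)).le]
  have : S * (S * Real.exp (-4*u^2)) < S * Real.exp (-(u + 1/2)^2) :=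
    mul_lt_mul_of_pos_left hstep hSpos
  nlinarith [this, hfac, hS2]

/-- The quantum discrimination risk for coherent states `|±u⟩` is strictly smaller
than the classical risk `1/2 − erf(u)` of the optimal test on `N(±u, 1/2)`. -/
theorem quantum_beats_classical_discrimination (u : ℝ) (hu : 0 < u) :
    (1 - Real.sqrt (1 - Real.exp (-4 * u ^ 2))) / 2
      < 1 / 2 - ∫ t in (0:ℝ)..u, Real.exp (-t ^ 2) / Real.sqrt Real.pi := by
  have hkey : 4 * (Jerf u)^2 < Real.pi * (1 - Real.exp (-4*u^2)) := by
    rcases le_total (u^2) 0.55 with h | h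
    · exact small_case hu h
    · exact large_case hu h
  have hA0 : 0 ≤ Jerf u :=
    intervalIntegral.integral_nonneg hu.le (fun t _ => (Real.exp_pos _).le)
  have hSpos : 0 < Real.sqrt Real.pi := Real.sqrt_pos.2 Real.pi_pos
  have hS2 : Real.sqrt Real.pi ^ 2 = Real.pi := Real.sq_sqrt Real.pi_pos.le
  have hint : (∫ t in (0:ℝ)..u, Real.exp (-t ^ 2) / Real.sqrt Real.pi)
      = Jerf u / Real.sqrt Real.pi := by
    rw [Jerf, ← intervalIntegral.integral_div]
  have hsq : (2 * Jerf u / Real.sqrt Real.pi)^2 < 1 - Real.exp (-4*u^2) := by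
    rw [div_pow, hS2, div_lt_iff₀ Real.pi_pos]
    nlinarith [hkey]
  have hlt : 2 * Jerf u / Real.sqrt Real.pi < Real.sqrt (1 - Real.exp (-4*u^2)) :=
    (Real.lt_sqrt (by positivity)).2 hsq
  rw [hint]
  have h4 : Real.exp (-4 * u ^ 2) = Real.exp (-4*u^2) := by norm_num
  rw [h4]
  have : Jerf u / Real.sqrt Real.pi = (2 * Jerf u / Real.sqrt Real.pi) / 2 := by ring
  linarith [hlt]
end

section
/- The weights p_n(j) in the Clebsch–Gordan decomposition of ρ^{⊗n} form a probability distribution: Σ_j p_n(j) = 1, where p_n(j) = (n_j/(2μ−1)) (1−μ)^{n/2−j} μ^{n/2+j+1} (1 − ((1−μ)/μ)^{2j+1}), with n_j = C(n, n/2−j) − C(n, n/2−j−1), summed over j = n/2 − k for k = 0,...,⌊n/2⌋. -/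
open Finset

/-- The block weights `p_n(j)` (with `j = n/2 − k`) form a probability distribution:
`Σ_k p_n(n/2 − k) = 1`. -/
theorem block_weights_sum_to_one (n : ℕ) (hn : 1 ≤ n) (μ : ℝ)
    (hμ : μ ∈ Set.Ioo (1/2 : ℝ) 1) :
    ∑ k ∈ Finset.range (n / 2 + 1),
        (((n.choose k : ℝ) - (if k = 0 then 0 else (n.choose (k - 1) : ℝ))) / (2 * μ - 1))
          * (1 - μ) ^ k * μ ^ (n - k + 1) * (1 - ((1 - μ) / μ) ^ (n - 2 * k + 1))
      = 1 := by
  obtain ⟨h1, h2⟩ := hμ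
  have hμ0 : μ ≠ 0 := by linarith
  have hdne : (2 * μ - 1) ≠ 0 := by linarith
  set c : ℕ → ℝ := fun k => (n.choose k : ℝ) - (if k = 0 then 0 else (n.choose (k - 1) : ℝ))
    with hc
  have htel : ∀ K : ℕ, ∑ k ∈ range (K + 1), c k = (n.choose K : ℝ) := by
    intro K
    induction K with
    | zero => simp [hc]
    | succ K ih =>
      rw [Finset.sum_range_succ, ih]
      simp [hc]
  have hstep : ∀ k ∈ range (n / 2 + 1),
      (c k / (2 * μ - 1)) * (1 - μ) ^ k * μ ^ (n - k + 1) * (1 - ((1 - μ) / μ) ^ (n - 2 * k + 1))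
      = ∑ m ∈ range (n + 1),
          (if k ≤ m ∧ m + k ≤ n then c k * (μ ^ m * (1 - μ) ^ (n - m)) else 0) := by
    intro k hk
    rw [Finset.mem_range] at hk
    have h2k : 2 * k ≤ n := by omega
    have hfil : (range (n + 1)).filter (fun m => k ≤ m ∧ m + k ≤ n) = Finset.Icc k (n - k) := by
      ext m; simp [Finset.mem_Icc]; omega
    rw [← Finset.sum_filter, hfil]
    obtain ⟨d, rfl⟩ : ∃ d, n = 2 * k + d := ⟨n - 2 * k, by omega⟩
    have he1 : 2 * k + d - k = k + d := by omega
    have he2 : 2 * k + d - 2 * k + 1 = d + 1 := by omega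
    rw [he1, he2]
    have hIcc : ∑ m ∈ Finset.Icc k (k + d), c k * (μ ^ m * (1 - μ) ^ (2 * k + d - m))
        = ∑ i ∈ range (d + 1), c k * (μ ^ (k + i) * (1 - μ) ^ (k + (d - i))) := by
      rw [show Finset.Icc k (k + d) = Finset.Ico k (k + d + 1) by rw [Finset.Ico_add_one_right_eq_Icc],
        Finset.sum_Ico_eq_sum_range]
      apply Finset.sum_congr (by congr 1; omega)
      intro i hi
      rw [Finset.mem_range] at hi
      have hexp : 2 * k + d - (k + i) = k + (d - i) := by omega
      rw [hexp]
    rw [hIcc]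
    have hgeom : (∑ i ∈ range (d + 1), μ ^ i * (1 - μ) ^ (d - i)) * (μ - (1 - μ))
        = μ ^ (d + 1) - (1 - μ) ^ (d + 1) := by
      have := geom_sum₂_mul μ (1 - μ) (d + 1)
      simpa using this
    have hsum : ∑ i ∈ range (d + 1), c k * (μ ^ (k + i) * (1 - μ) ^ (k + (d - i)))
        = c k * (μ ^ k * (1 - μ) ^ k) * ∑ i ∈ range (d + 1), μ ^ i * (1 - μ) ^ (d - i) := by
      rw [Finset.mul_sum]
      apply Finset.sum_congr rfl
      intro i hi
      rw [pow_add, pow_add]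
      ring
    rw [hsum]
    have hpow : ((1 - μ) / μ) ^ (d + 1) * μ ^ (k + d + 1) = (1 - μ) ^ (d + 1) * μ ^ k := by
      rw [div_pow]
      field_simp
      rw [show k + d + 1 = k + (d + 1) by ring, pow_add]
      ring
    have key : (∑ i ∈ range (d + 1), μ ^ i * (1 - μ) ^ (d - i))
        = (μ ^ (d + 1) - (1 - μ) ^ (d + 1)) / (2 * μ - 1) := by
      rw [eq_div_iff hdne, ← hgeom]
      ring_nf
    rw [key]
    rw [div_pow]
    field_simp
    rw [show k + d + 1 = k + (d + 1) by ring, pow_add]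
    ring
  rw [Finset.sum_congr rfl hstep, Finset.sum_comm]
  have hinner : ∀ m ∈ range (n + 1),
      (∑ k ∈ range (n / 2 + 1),
        (if k ≤ m ∧ m + k ≤ n then c k * (μ ^ m * (1 - μ) ^ (n - m)) else 0))
      = (n.choose m : ℝ) * (μ ^ m * (1 - μ) ^ (n - m)) := by
    intro m hm
    rw [Finset.mem_range] at hm
    set K := min m (n - m) with hK
    have hKle : K + 1 ≤ n / 2 + 1 := by omega
    have hcond : ∀ k, (k ≤ m ∧ m + k ≤ n) ↔ k ≤ K := by intro k; omega
    have hfil : (range (n / 2 + 1)).filter (fun k => k ≤ m ∧ m + k ≤ n) = range (K + 1) := by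
      ext k; simp [hcond]; omega
    rw [← Finset.sum_filter, hfil, ← Finset.sum_mul, htel]
    congr 2
    rcases le_or_gt m (n - m) with h | h
    · have hKm : K = m := by omega
      rw [hKm]
    · have hKm : K = n - m := by omega
      rw [hKm, Nat.choose_symm (by omega)]
  rw [Finset.sum_congr rfl hinner]
  have hbin := add_pow μ (1 - μ) n
  rw [show μ + (1 - μ) = (1 : ℝ) by ring, one_pow] at hbin
  conv_rhs => rw [hbin]
  exact Finset.sum_congr rfl fun m _ => by ring
end
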